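/- For every λ > 0, the function Φ^{2,λ}(t,y) := ((y−λ)/(√((1−t)³)·y)) · exp(λ²/2) · exp(−(y−λ)²/(2(1−t))), defined for t ∈ (0,1) and y > 0, satisfies the partial differential equation (1/2)·∂²_{yy}Φ^{2,λ}(t,y) + (1/y)·∂_y Φ^{2,λ}(t,y) + ∂_t Φ^{2,λ}(t,y) = 0 for all t ∈ (0,1) and y > 0. -/

import Mathlib

set_option maxHeartbeats 1000000


open Real

/-- `Φ^{2,λ}(t,y)`. -/
noncomputable def Phi2 (lam t y : ℝ) : ℝ :=
  (y - lam) / (Real.sqrt ((1 - t) ^ 3) * y) * Real.exp (lam ^ 2 / 2) *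
    Real.exp (-(y - lam) ^ 2 / (2 * (1 - t)))

noncomputable def D1aux (lam t z : ℝ) : ℝ :=
  Real.exp (lam ^ 2 / 2) / Real.sqrt ((1 - t) ^ 3) * Real.exp (-(z - lam) ^ 2 / (2 * (1 - t))) *
    (lam / z ^ 2 - (z - lam) ^ 2 / (z * (1 - t)))

lemma hasDerivAt_exp_part (lam t z : ℝ) (hs : (0:ℝ) < 1 - t) :
    HasDerivAt (fun w : ℝ => Real.exp (-(w - lam) ^ 2 / (2 * (1 - t))))
      (Real.exp (-(z - lam) ^ 2 / (2 * (1 - t))) * (-(z - lam) / (1 - t))) z := by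
  have h1 : HasDerivAt (fun w : ℝ => w - lam) 1 z := (hasDerivAt_id z).sub_const lam
  have h2 : HasDerivAt (fun w : ℝ => -(w - lam) ^ 2 / (2 * (1 - t)))
      (-(2 * (z - lam) ^ 1 * 1) / (2 * (1 - t))) z := ((h1.pow 2).neg).div_const _
  have := h2.exp
  convert this using 1
  field_simp

lemma hasDerivAt_Phi2_y (lam t z : ℝ) (hs : (0:ℝ) < 1 - t) (hz : 0 < z) :
    HasDerivAt (fun w => Phi2 lam t w) (D1aux lam t z) z := by
  have hr : 0 < Real.sqrt ((1 - t) ^ 3) := Real.sqrt_pos.2 (by positivity)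
  have h1 : HasDerivAt (fun w : ℝ => w - lam) 1 z := (hasDerivAt_id z).sub_const lam
  have h2 : HasDerivAt (fun w : ℝ => Real.sqrt ((1 - t) ^ 3) * w)
      (Real.sqrt ((1 - t) ^ 3) * 1) z := (hasDerivAt_id z).const_mul _
  have hden : Real.sqrt ((1 - t) ^ 3) * z ≠ 0 := by positivity
  have h3 := h1.div h2 hden
  have h5 := hasDerivAt_exp_part lam t z hs
  have key := (h3.mul_const (Real.exp (lam ^ 2 / 2))).mul h5
  have : HasDerivAt (fun w => Phi2 lam t w) _ z := key
  convert this using 1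
  unfold D1aux
  simp only [Pi.div_apply]
  field_simp
  ring

lemma hasDerivAt_D1aux (lam t y : ℝ) (hs : (0:ℝ) < 1 - t) (hy : 0 < y) :
    HasDerivAt (fun z => D1aux lam t z)
      (Real.exp (lam ^ 2 / 2) / Real.sqrt ((1 - t) ^ 3) *
        Real.exp (-(y - lam) ^ 2 / (2 * (1 - t))) *
        (-(y - lam) / (1 - t) * (lam / y ^ 2 - (y - lam) ^ 2 / (y * (1 - t))) -
          2 * lam / y ^ 3 - (y ^ 2 - lam ^ 2) / (y ^ 2 * (1 - t)))) y := by
  have hr : 0 < Real.sqrt ((1 - t) ^ 3) := Real.sqrt_pos.2 (by positivity)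
  have h1 : HasDerivAt (fun w : ℝ => w - lam) 1 y := (hasDerivAt_id y).sub_const lam
  have hpow : HasDerivAt (fun z : ℝ => z ^ 2) (2 * y ^ 1) y := by
    simpa using hasDerivAt_pow 2 y
  have ha : HasDerivAt (fun z : ℝ => lam / z ^ 2)
      ((0 * y ^ 2 - lam * (2 * y ^ 1)) / (y ^ 2) ^ 2) y :=
    (hasDerivAt_const y lam).div hpow (by positivity)
  have hb : HasDerivAt (fun z : ℝ => z * (1 - t)) (1 * (1 - t)) y :=
    (hasDerivAt_id y).mul_const _
  have hc : HasDerivAt (fun z : ℝ => (z - lam) ^ 2 / (z * (1 - t)))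
      ((2 * (y - lam) ^ 1 * 1 * (y * (1 - t)) - (y - lam) ^ 2 * (1 * (1 - t))) / (y * (1 - t)) ^ 2) y
      := by
    have := ((h1.pow 2).div hb (by positivity))
    exact this.congr_deriv (by norm_num [Pi.pow_apply])
  have hh := ha.sub hc
  have hE := hasDerivAt_exp_part lam t y hs
  have key := ((hE.const_mul (Real.exp (lam ^ 2 / 2) / Real.sqrt ((1 - t) ^ 3))).mul hh)
  have : HasDerivAt (fun z => D1aux lam t z) _ y := key
  convert this using 1
  have hsne : (1 - t) ≠ 0 := ne_of_gt hs
  simp only [Pi.sub_apply]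
  field_simp
  ring

lemma hasDerivAt_Phi2_t (lam t y : ℝ) (hs : (0:ℝ) < 1 - t) (hy : 0 < y) :
    HasDerivAt (fun s => Phi2 lam s y)
      (Real.exp (lam ^ 2 / 2) * ((y - lam) / y) / Real.sqrt ((1 - t) ^ 3) *
        Real.exp (-(y - lam) ^ 2 / (2 * (1 - t))) *
        (3 / (2 * (1 - t)) - (y - lam) ^ 2 / (2 * (1 - t) ^ 2))) t := by
  have hr : 0 < Real.sqrt ((1 - t) ^ 3) := Real.sqrt_pos.2 (by positivity)
  have hone : HasDerivAt (fun s : ℝ => 1 - s) (-1) t := by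
    simpa using (hasDerivAt_id t).const_sub 1
  have hcube : HasDerivAt (fun s : ℝ => (1 - s) ^ 3) (3 * (1 - t) ^ 2 * (-1)) t := hone.pow 3
  have hsqrt : HasDerivAt (fun s : ℝ => Real.sqrt ((1 - s) ^ 3))
      (3 * (1 - t) ^ 2 * (-1) / (2 * Real.sqrt ((1 - t) ^ 3))) t :=
    hcube.sqrt (by positivity)
  have hden : HasDerivAt (fun s : ℝ => Real.sqrt ((1 - s) ^ 3) * y)
      (3 * (1 - t) ^ 2 * (-1) / (2 * Real.sqrt ((1 - t) ^ 3)) * y) t := hsqrt.mul_const y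
  have hdenne : Real.sqrt ((1 - t) ^ 3) * y ≠ 0 := by positivity
  have hq := (hasDerivAt_const t (y - lam)).div hden hdenne
  have h2s : HasDerivAt (fun s : ℝ => 2 * (1 - s)) (2 * (-1)) t := hone.const_mul 2
  have hexparg := (hasDerivAt_const t (-(y - lam) ^ 2)).div h2s (by positivity)
  have hE := hexparg.exp
  have key := (hq.mul_const (Real.exp (lam ^ 2 / 2))).mul hE
  have : HasDerivAt (fun s => Phi2 lam s y) _ t := key
  convert this using 1
  simp only [Pi.div_apply]
  have hsq : Real.sqrt ((1 - t) ^ 3) = (1 - t) * Real.sqrt (1 - t) := by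
    rw [pow_succ, Real.sqrt_mul (by positivity), Real.sqrt_sq hs.le]
  rw [hsq]
  have hq0 : 0 < Real.sqrt (1 - t) := Real.sqrt_pos.2 hs
  set q := Real.sqrt (1 - t) with hqdef
  rw [show (1:ℝ) - t = q ^ 2 from (Real.sq_sqrt hs.le).symm]
  field_simp
  ring

/-- `Φ^{2,λ}` solves the backward equation of the three dimensional
Bessel process: `(1/2)∂²_{yy}Φ² + (1/y)∂_yΦ² + ∂_tΦ² = 0` on `(0,1) × (0,∞)`. -/
theorem Phi2_pde (lam : ℝ) (hlam : 0 < lam) (t : ℝ) (ht : t ∈ Set.Ioo (0 : ℝ) 1)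
    (y : ℝ) (hy : 0 < y) :
    (1 / 2) * deriv (fun z => deriv (fun w => Phi2 lam t w) z) y +
      (1 / y) * deriv (fun w => Phi2 lam t w) y +
      deriv (fun s => Phi2 lam s y) t = 0 := by
  obtain ⟨ht0, ht1⟩ := ht
  have hs : (0:ℝ) < 1 - t := by linarith
  have hd1 : deriv (fun w => Phi2 lam t w) y = D1aux lam t y :=
    (hasDerivAt_Phi2_y lam t y hs hy).deriv
  have hEq : (fun z => deriv (fun w => Phi2 lam t w) z) =ᶠ[nhds y] (fun z => D1aux lam t z) := by
    filter_upwards [Ioi_mem_nhds hy] with z hz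
    exact (hasDerivAt_Phi2_y lam t z hs hz).deriv
  have hd2 : deriv (fun z => deriv (fun w => Phi2 lam t w) z) y =
      Real.exp (lam ^ 2 / 2) / Real.sqrt ((1 - t) ^ 3) *
        Real.exp (-(y - lam) ^ 2 / (2 * (1 - t))) *
        (-(y - lam) / (1 - t) * (lam / y ^ 2 - (y - lam) ^ 2 / (y * (1 - t))) -
          2 * lam / y ^ 3 - (y ^ 2 - lam ^ 2) / (y ^ 2 * (1 - t))) := by
    rw [hEq.deriv_eq]
    exact (hasDerivAt_D1aux lam t y hs hy).deriv
  have hdt : deriv (fun s => Phi2 lam s y) t =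
      Real.exp (lam ^ 2 / 2) * ((y - lam) / y) / Real.sqrt ((1 - t) ^ 3) *
        Real.exp (-(y - lam) ^ 2 / (2 * (1 - t))) *
        (3 / (2 * (1 - t)) - (y - lam) ^ 2 / (2 * (1 - t) ^ 2)) :=
    (hasDerivAt_Phi2_t lam t y hs hy).deriv
  rw [hd2, hd1, hdt]
  unfold D1aux
  have hr : 0 < Real.sqrt ((1 - t) ^ 3) := Real.sqrt_pos.2 (by positivity)
  have hsq : Real.sqrt ((1 - t) ^ 3) = (1 - t) * Real.sqrt (1 - t) := by
    rw [pow_succ, Real.sqrt_mul (by positivity), Real.sqrt_sq hs.le]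
  rw [hsq]
  have hq0 : 0 < Real.sqrt (1 - t) := Real.sqrt_pos.2 hs
  set q := Real.sqrt (1 - t) with hqdef
  rw [show (1:ℝ) - t = q ^ 2 from (Real.sq_sqrt hs.le).symm]
  field_simp
  ring
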